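/- Let m ≥ 0 be an integer and let g, T : ℝ → ℝ be m times continuously differentiable functions such that g′(x̄) ≠ 0 and T(x̄) ≠ 0 for all x̄. Then there exist functions c₀, c₁, …, c_m : ℝ → ℝ, depending only on g and T (not on y), with c_m = T/(g′)^m, such that for every m times continuously differentiable function y : ℝ → ℝ, setting ȳ(x̄) := y(g(x̄))/T(x̄), one has y⁽ᵐ⁾(g(x̄)) = Σ_{k=0}^{m} c_k(x̄)·ȳ⁽ᵏ⁾(x̄) for all x̄ ∈ ℝ. -/

import Mathlib

lemma stmt2_aux (m : ℕ) (g T : ℝ → ℝ)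
    (hg : ContDiff ℝ (m : ℕ∞) g) (hT : ContDiff ℝ (m : ℕ∞) T)
    (hg' : ∀ x, deriv g x ≠ 0) (hT0 : ∀ x, T x ≠ 0) :
    ∀ n, n ≤ m → ∃ c : ℕ → ℝ → ℝ,
      (∀ k, ContDiff ℝ ((m - n : ℕ) : ℕ∞) (c k)) ∧
      (∀ k, n < k → c k = fun _ => (0:ℝ)) ∧
      (c n = fun x => T x / (deriv g x) ^ n) ∧
      ∀ y : ℝ → ℝ, ContDiff ℝ (m : ℕ∞) y → ∀ x : ℝ,
        iteratedDeriv n y (g x)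
          = ∑ k ∈ Finset.range (n + 1), c k x * iteratedDeriv k (fun s => y (g s) / T s) x := by
  intro n
  induction n with
  | zero =>
    intro _
    refine ⟨fun k => if k = 0 then T else fun _ => 0, ?_, ?_, ?_, ?_⟩
    · intro k
      by_cases h : k = 0
      · simpa [h] using hT
      · simp only [h, if_false]; exact contDiff_const
    · intro k hk
      simp only []
      rw [if_neg (by omega : ¬ k = 0)]
    · funext x; simp
    · intro y hy x
      have h00 : (fun k => if k = 0 then T else fun _ => (0:ℝ)) 0 = T := if_pos rfl
      rw [Finset.sum_range_one, h00, iteratedDeriv_zero]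
      show y (g x) = T x * (y (g x) / T x)
      rw [mul_div_assoc', mul_comm (T x), mul_div_assoc, div_self (hT0 x), mul_one]
  | succ n ih =>
    intro hnm
    obtain ⟨c, hcd, hc0, hctop, hcid⟩ := ih (le_of_lt (Nat.lt_of_succ_le hnm))
    set r : ℕ := m - (n+1) with hr
    have hmn : m - n = r + 1 := by omega
    rw [hmn] at hcd
    -- smoothness of deriv g
    have hgder : ContDiff ℝ ((m - 1 : ℕ) : ℕ∞) (deriv g) := by
      have h1 : ContDiff ℝ (((m - 1 : ℕ):ℕ∞):WithTop ℕ∞) g → True := fun _ => trivial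
      have h2 : ContDiff ℝ ((((m-1:ℕ):ℕ∞)) + 1 : WithTop ℕ∞) g := by
        have : ((m - 1) + 1 : ℕ) = m := by omega
        exact_mod_cast (this ▸ hg : ContDiff ℝ (((m-1)+1 : ℕ) : ℕ∞) g)
      exact (contDiff_succ_iff_deriv.mp h2).2.2
    have hgr : ContDiff ℝ (r : ℕ∞) (deriv g) :=
      hgder.of_le (by exact_mod_cast (by omega : r ≤ m - 1))
    have hcr : ∀ k, ContDiff ℝ (r : ℕ∞) (deriv (c k)) := by
      intro k
      have h2 : ContDiff ℝ (((r:ℕ∞)) + 1 : WithTop ℕ∞) (c k) := by exact_mod_cast hcd k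
      exact (contDiff_succ_iff_deriv.mp h2).2.2
    have hcr' : ∀ k, ContDiff ℝ (r : ℕ∞) (c k) := fun k =>
      (hcd k).of_le (by exact_mod_cast (by omega : r ≤ r + 1))
    -- new coefficients
    set c' : ℕ → ℝ → ℝ := fun k x =>
      (deriv (c k) x + (if k = 0 then 0 else c (k-1) x)) / deriv g x with hc'
    have hc'succ : ∀ k x, c' (k+1) x = (deriv (c (k+1)) x + c k x) / deriv g x := by
      intro k x; simp [hc']
    refine ⟨c', ?_, ?_, ?_, ?_⟩
    · intro k
      by_cases h : k = 0
      · subst h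
        have : c' 0 = fun x => (deriv (c 0) x + 0) / deriv g x := by funext x; simp [hc']
        rw [this]
        exact ((hcr 0).add contDiff_const).div hgr hg'
      · have : c' k = fun x => (deriv (c k) x + c (k-1) x) / deriv g x := by
          funext x; simp [hc', h]
        rw [this]
        exact ((hcr k).add (hcr' (k-1))).div hgr hg'
    · intro k hk
      funext x
      obtain ⟨j, rfl⟩ : ∃ j, k = j + 1 := ⟨k - 1, by omega⟩
      rw [hc'succ, hc0 (j+1) (by omega), hc0 j (by omega)]
      simp
    · funext x
      rw [hc'succ, hc0 (n+1) (by omega), hctop]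
      simp [pow_succ, div_div]
    · intro y hy x
      set yb : ℝ → ℝ := fun s => y (g s) / T s with hyb
      have hyc : ContDiff ℝ (m : ℕ∞) yb := (hy.comp hg).div hT hT0
      have hgdiff : Differentiable ℝ g :=
        hg.differentiable (by exact_mod_cast (by omega : m ≠ 0))
      have hydiffn : Differentiable ℝ (iteratedDeriv n y) :=
        hy.differentiable_iteratedDeriv n (by exact_mod_cast (by omega : n < m))
      have hybk : ∀ k, k ≤ n → Differentiable ℝ (iteratedDeriv k yb) := fun k hk =>
        hyc.differentiable_iteratedDeriv k (by exact_mod_cast (by omega : k < m))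
      have hcdiff : ∀ k, Differentiable ℝ (c k) := fun k =>
        (hcd k).differentiable (by exact_mod_cast (by omega : r + 1 ≠ 0))
      have hfun : (fun x => iteratedDeriv n y (g x))
          = fun x => ∑ k ∈ Finset.range (n+1), c k x * iteratedDeriv k yb x := by
        funext z; exact hcid y hy z
      have hL : deriv (fun x => iteratedDeriv n y (g x)) x
          = iteratedDeriv (n+1) y (g x) * deriv g x := by
        have he : (fun x => iteratedDeriv n y (g x)) = (iteratedDeriv n y) ∘ g := rfl
        rw [he, deriv_comp x (hydiffn (g x)) (hgdiff x), ← iteratedDeriv_succ]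
      have hR : deriv (fun x => ∑ k ∈ Finset.range (n+1), c k x * iteratedDeriv k yb x) x
          = ∑ k ∈ Finset.range (n+1),
              (deriv (c k) x * iteratedDeriv k yb x + c k x * iteratedDeriv (k+1) yb x) := by
        rw [deriv_fun_sum (u := Finset.range (n+1)) (A := fun k y => c k y * iteratedDeriv k yb y) (fun k hk => ((hcdiff k x).mul
          ((hybk k (Nat.lt_succ_iff.mp (Finset.mem_range.mp hk))) x)))]
        refine Finset.sum_congr rfl fun k hk => ?_
        have hk' : k ≤ n := Nat.lt_succ_iff.mp (Finset.mem_range.mp hk)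
        rw [deriv_fun_mul (hcdiff k x) (hybk k hk' x), iteratedDeriv_succ]
      have key : iteratedDeriv (n+1) y (g x) * deriv g x
          = ∑ k ∈ Finset.range (n+1),
              (deriv (c k) x * iteratedDeriv k yb x + c k x * iteratedDeriv (k+1) yb x) := by
        rw [← hL, ← hR, hfun]
      have hAtop : deriv (c (n+1)) x = 0 := by
        rw [hc0 (n+1) (by omega)]; simp
      -- massage the target sum
      have expand : ∑ k ∈ Finset.range (n+2), c' k x * iteratedDeriv k yb x
          = (∑ k ∈ Finset.range (n+2),
              (deriv (c k) x + (if k = 0 then 0 else c (k-1) x)) * iteratedDeriv k yb x)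
            / deriv g x := by
        rw [Finset.sum_div]
        exact Finset.sum_congr rfl fun k _ => by rw [hc', div_mul_eq_mul_div]
      have combine : ∑ k ∈ Finset.range (n+2),
              (deriv (c k) x + (if k = 0 then 0 else c (k-1) x)) * iteratedDeriv k yb x
          = ∑ k ∈ Finset.range (n+1),
              (deriv (c k) x * iteratedDeriv k yb x + c k x * iteratedDeriv (k+1) yb x) := by
        simp only [add_mul]
        rw [Finset.sum_add_distrib, Finset.sum_add_distrib]
        congr 1
        · rw [Finset.sum_range_succ, hAtop]; simp
        · rw [Finset.sum_range_succ']
          simp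
      rw [expand, combine, ← key, mul_div_assoc, div_self (hg' x), mul_one]

theorem stmt_2 (m : ℕ) (g T : ℝ → ℝ)
    (hg : ContDiff ℝ (m : ℕ∞) g) (hT : ContDiff ℝ (m : ℕ∞) T)
    (hg' : ∀ x, deriv g x ≠ 0) (hT0 : ∀ x, T x ≠ 0) :
    ∃ cfun : ℕ → ℝ → ℝ,
      (cfun m = fun x => T x / (deriv g x) ^ m) ∧
      ∀ y : ℝ → ℝ, ContDiff ℝ (m : ℕ∞) y →
        ∀ x : ℝ,
          iteratedDeriv m y (g x)
            = ∑ k ∈ Finset.range (m + 1),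
                cfun k x * iteratedDeriv k (fun s => y (g s) / T s) x := by
  obtain ⟨c, _, _, h1, h2⟩ := stmt2_aux m g T hg hT hg' hT0 m le_rfl
  exact ⟨c, h1, h2⟩
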